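/- Let H be a complex Hilbert space and T a bounded linear operator on H such that ‖I + K‖ = ‖T + K‖ for every compact operator K on H. Then T = I. -/

import Mathlib

/-- Any continuous linear functional on a normed space over `ℂ` is a compact operator. -/
lemma aux_compact_functional {H : Type*} [NormedAddCommGroup H] [NormedSpace ℂ H]
    (φ : H →L[ℂ] ℂ) : IsCompactOperator (⇑φ) := by
  rw [isCompactOperator_iff_exists_mem_nhds_image_subset_compact]
  refine ⟨Metric.ball 0 1, Metric.ball_mem_nhds 0 one_pos,
    Metric.closedBall 0 ‖φ‖, isCompact_closedBall 0 ‖φ‖, ?_⟩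
  rintro - ⟨y, hy, rfl⟩
  simp only [Metric.mem_closedBall, dist_zero_right]
  calc ‖φ y‖ ≤ ‖φ‖ * ‖y‖ := φ.le_opNorm y
  _ ≤ ‖φ‖ * 1 := mul_le_mul_of_nonneg_left (le_of_lt (by simpa using hy)) (norm_nonneg _)
  _ = ‖φ‖ := mul_one _

/-- If `T` is a bounded operator on a complex Hilbert space such that
`‖I + K‖ = ‖T + K‖` for every compact operator `K`, then `T = I`. -/
theorem stmt0 {H : Type*} [NormedAddCommGroup H] [InnerProductSpace ℂ H] [CompleteSpace H]
    (T : H →L[ℂ] H)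
    (h : ∀ K : H →L[ℂ] H, IsCompactOperator (⇑K) → ‖(1 : H →L[ℂ] H) + K‖ = ‖T + K‖) :
    T = 1 := by
  by_contra hne
  -- find a unit vector x with T x ≠ x
  obtain ⟨x0, hx0⟩ : ∃ x : H, T x ≠ x := by
    by_contra hall
    push_neg at hall
    exact hne (ContinuousLinearMap.ext fun y => by simp [hall y])
  have hx0ne : x0 ≠ 0 := by rintro rfl; simp at hx0
  have hnx0 : ((‖x0‖ : ℂ))⁻¹ ≠ 0 := by
    simp [norm_ne_zero_iff.mpr hx0ne]
  set x : H := ((‖x0‖ : ℂ))⁻¹ • x0 with hxdef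
  have hx : ‖x‖ = 1 := by
    rw [hxdef, norm_smul]
    simp [inv_mul_cancel₀ (norm_ne_zero_iff.mpr hx0ne)]
  have hTx : T x ≠ x := by
    rw [hxdef, map_smul]
    intro hcon
    exact hx0 (smul_right_injective H hnx0 hcon)
  set v : H := T x - x with hvdef
  have hv : v ≠ 0 := sub_ne_zero.mpr hTx
  set a : ℂ := inner ℂ x v with hadef
  set u : ℂ := if a = 0 then 1 else a / (‖a‖ : ℂ) with hudef
  have hu : ‖u‖ = 1 := by
    rw [hudef]
    split_ifs with h0
    · simp
    · rw [norm_div, Complex.norm_real, Real.norm_of_nonneg (norm_nonneg a)]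
      exact div_self (norm_ne_zero_iff.mpr h0)
  have hua : (starRingEnd ℂ) u * a = (‖a‖ : ℂ) := by
    rw [hudef]
    split_ifs with h0
    · simp [h0]
    · have hna : (‖a‖ : ℂ) ≠ 0 := by exact_mod_cast norm_ne_zero_iff.mpr h0
      rw [map_div₀, Complex.conj_ofReal, div_mul_eq_mul_div, RCLike.conj_mul,
        div_eq_iff hna]
      ring_nf
      rfl
  -- the rank-one compact perturbation
  set K : H →L[ℂ] H :=
    (u - 1) • ((ContinuousLinearMap.toSpanSingleton ℂ x).comp (innerSL ℂ x)) with hKdef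
  have hKapp : ∀ y : H, K y = ((u - 1) * (inner ℂ x y : ℂ)) • x := by
    intro y
    simp [hKdef, ContinuousLinearMap.toSpanSingleton_apply, smul_smul]
  have hKcompact : IsCompactOperator (⇑K) := by
    have h1 : IsCompactOperator
        (⇑(ContinuousLinearMap.toSpanSingleton ℂ x) ∘ ⇑(innerSL ℂ x)) :=
      (aux_compact_functional (innerSL ℂ x)).continuous_comp
        (ContinuousLinearMap.toSpanSingleton ℂ x).continuous
    have h2 := h1.smul (u - 1)
    have : ⇑K = (u - 1) • (⇑(ContinuousLinearMap.toSpanSingleton ℂ x) ∘ ⇑(innerSL ℂ x)) := by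
      funext y
      simp [hKapp y, smul_smul, ContinuousLinearMap.toSpanSingleton_apply]
    rw [this]
    exact h2
  -- 1 + K is an isometry
  have hnormu2 : u.re ^ 2 + u.im ^ 2 = 1 := by
    have h1 : Complex.normSq u = 1 := by
      have := congrArg (· ^ 2) hu
      simpa [Complex.sq_norm] using this
    rw [Complex.normSq_apply] at h1
    nlinarith [h1]
  have hisom : ∀ y : H, ‖((1 : H →L[ℂ] H) + K) y‖ = ‖y‖ := by
    intro y
    set t : ℂ := inner ℂ x y with htdef
    have happ : ((1 : H →L[ℂ] H) + K) y = y + ((u - 1) * t) • x := by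
      simp [hKapp y, htdef]
    have hsq : ‖y + ((u - 1) * t) • x‖ ^ 2 = ‖y‖ ^ 2 := by
      rw [norm_add_sq (𝕜 := ℂ)]
      have hinner : (inner ℂ y (((u - 1) * t) • x) : ℂ) = (u - 1) * (t * (starRingEnd ℂ) t) := by
        rw [inner_smul_right]
        have hyx : (inner ℂ y x : ℂ) = (starRingEnd ℂ) t := by rw [htdef, inner_conj_symm]
        rw [hyx]
        ring
      rw [hinner, norm_smul, hx, mul_one]
      simp only [RCLike.re_to_complex]
      have hre : ((u - 1) * (t * (starRingEnd ℂ) t)).re = (u.re - 1) * ‖t‖ ^ 2 := by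
        rw [Complex.mul_conj']
        simp [← Complex.ofReal_pow]
      have hnu1 : ‖(u - 1) * t‖ ^ 2 = (2 - 2 * u.re) * ‖t‖ ^ 2 := by
        rw [norm_mul, mul_pow]
        congr 1
        have : ‖u - 1‖ ^ 2 = Complex.normSq (u - 1) := by
          rw [← Complex.sq_norm]
        rw [this, Complex.normSq_apply]
        simp only [Complex.sub_re, Complex.sub_im, Complex.one_re, Complex.one_im]
        nlinarith [hnormu2]
      rw [hre, hnu1]
      ring
    rw [happ]
    have hn1 : (0:ℝ) ≤ ‖y + ((u - 1) * t) • x‖ := norm_nonneg _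
    have hn2 : (0:ℝ) ≤ ‖y‖ := norm_nonneg _
    nlinarith [hsq]
  have hnorm1 : ‖(1 : H →L[ℂ] H) + K‖ = 1 := by
    apply le_antisymm
    · exact ContinuousLinearMap.opNorm_le_bound _ zero_le_one
        (fun y => by rw [hisom y, one_mul])
    · have h1 : ‖((1 : H →L[ℂ] H) + K) x‖ = 1 := by rw [hisom x, hx]
      calc (1:ℝ) = ‖((1 : H →L[ℂ] H) + K) x‖ := h1.symm
      _ ≤ ‖(1 : H →L[ℂ] H) + K‖ * ‖x‖ := ContinuousLinearMap.le_opNorm _ _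
      _ = ‖(1 : H →L[ℂ] H) + K‖ := by rw [hx, mul_one]
  have hTK : ‖T + K‖ = 1 := by rw [← h K hKcompact, hnorm1]
  -- evaluate T + K at x
  have hxx : (inner ℂ x x : ℂ) = 1 := by
    rw [inner_self_eq_norm_sq_to_K, hx]
    norm_num
  have happx : (T + K) x = u • x + v := by
    rw [ContinuousLinearMap.add_apply, hKapp x, hxx, mul_one, hvdef]
    module
  have hle : ‖(T + K) x‖ ≤ 1 := by
    calc ‖(T + K) x‖ ≤ ‖T + K‖ * ‖x‖ := ContinuousLinearMap.le_opNorm _ _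
    _ = 1 := by rw [hTK, hx, one_mul]
  have hgt : ‖(T + K) x‖ ^ 2 = 1 + 2 * ‖a‖ + ‖v‖ ^ 2 := by
    rw [happx, norm_add_sq (𝕜 := ℂ)]
    have h1 : ‖u • x‖ = 1 := by rw [norm_smul, hu, hx, mul_one]
    have h2 : (inner ℂ (u • x) v : ℂ) = (‖a‖ : ℂ) := by
      rw [inner_smul_left, ← hadef, hua]
    rw [h1, h2]
    simp
  have hvpos : 0 < ‖v‖ := norm_pos_iff.mpr hv
  have hanneg : 0 ≤ ‖a‖ := norm_nonneg a
  nlinarith [hle, hgt, norm_nonneg ((T + K) x)]
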